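/- Let X be a normed space and I, K ideals on ℕ such that I ∨ K is a proper ideal. A sequence (x_n) in X is weakly I^K-convergent to x if and only if it is weakly (I ∨ K)^K-convergent to x. -/
import Mathlib


open Classical Filter

/-- An ideal on ℕ: contains ∅, closed under subsets and finite unions. -/
def IsIdeal (I : Set (Set ℕ)) : Prop :=
  ∅ ∈ I ∧ (∀ A B : Set ℕ, A ∈ I → B ⊆ A → B ∈ I) ∧
    (∀ A B : Set ℕ, A ∈ I → B ∈ I → A ∪ B ∈ I)

/-- A nontrivial (proper) ideal. -/
def NontrivialIdeal (I : Set (Set ℕ)) : Prop :=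
  IsIdeal I ∧ Set.univ ∉ I ∧ I ≠ {∅}

/-- An admissible ideal: nontrivial and containing all singletons. -/
def AdmissibleIdeal (I : Set (Set ℕ)) : Prop :=
  NontrivialIdeal I ∧ ∀ n : ℕ, ({n} : Set ℕ) ∈ I

/-- The modified sequence: `x n` on `M`, the constant `a` off `M`. -/
noncomputable def modSeq {X : Type*} (M : Set ℕ) (x : ℕ → X) (a : X) : ℕ → X :=
  fun n => if n ∈ M then x n else a

/-- Weak `K`-convergence of a sequence in a normed space. -/
def WeakConv {X : Type*} [NormedAddCommGroup X] [NormedSpace ℝ X]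
    (K : Set (Set ℕ)) (x : ℕ → X) (a : X) : Prop :=
  ∀ f : X →L[ℝ] ℝ, ∀ ε : ℝ, 0 < ε → {n : ℕ | ε ≤ |f (x n) - f a|} ∈ K

/-- Weak `I^K`-convergence: some `M` in the dual filter of `I` such that the
modified sequence is weakly `K`-convergent. -/
def WeakIK {X : Type*} [NormedAddCommGroup X] [NormedSpace ℝ X]
    (I K : Set (Set ℕ)) (x : ℕ → X) (a : X) : Prop :=
  ∃ M : Set ℕ, Mᶜ ∈ I ∧ WeakConv K (modSeq M x a) a

/-- Ordinary weak convergence. -/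
def WeakTendsto {X : Type*} [NormedAddCommGroup X] [NormedSpace ℝ X]
    (x : ℕ → X) (a : X) : Prop :=
  ∀ f : X →L[ℝ] ℝ, Tendsto (fun n => f (x n)) atTop (nhds (f a))

/-- Weak* `K`-convergence of a sequence of continuous linear functionals. -/
def WeakStarConv {X : Type*} [NormedAddCommGroup X] [NormedSpace ℝ X]
    (K : Set (Set ℕ)) (f : ℕ → X →L[ℝ] ℝ) (g : X →L[ℝ] ℝ) : Prop :=
  ∀ x : X, ∀ ε : ℝ, 0 < ε → {n : ℕ | ε ≤ |f n x - g x|} ∈ K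

/-- Weak* `I^K`-convergence. -/
def WeakStarIK {X : Type*} [NormedAddCommGroup X] [NormedSpace ℝ X]
    (I K : Set (Set ℕ)) (f : ℕ → X →L[ℝ] ℝ) (g : X →L[ℝ] ℝ) : Prop :=
  ∃ M : Set ℕ, Mᶜ ∈ I ∧ WeakStarConv K (modSeq M f g) g

/-- Ordinary weak* convergence (pointwise on X). -/
def WeakStarTendsto {X : Type*} [NormedAddCommGroup X] [NormedSpace ℝ X]
    (f : ℕ → X →L[ℝ] ℝ) (g : X →L[ℝ] ℝ) : Prop :=
  ∀ x : X, Tendsto (fun n => f n x) atTop (nhds (g x))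

/-- The join of two ideals: `{A ∪ B : A ∈ I, B ∈ K}`. -/
def idealJoin (I K : Set (Set ℕ)) : Set (Set ℕ) :=
  {C | ∃ A ∈ I, ∃ B ∈ K, C = A ∪ B}

theorem stmt_8 {X : Type*} [NormedAddCommGroup X] [NormedSpace ℝ X]
    (I K : Set (Set ℕ)) (hI : IsIdeal I) (hK : IsIdeal K)
    (hjoin : Set.univ ∉ idealJoin I K)
    (x : ℕ → X) (a : X) :
    WeakIK I K x a ↔ WeakIK (idealJoin I K) K x a := by
  constructor
  · rintro ⟨M, hM, hconv⟩
    exact ⟨M, ⟨Mᶜ, hM, ∅, hK.1, by simp⟩, hconv⟩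
  · rintro ⟨M, ⟨A, hA, B, hB, hMc⟩, hconv⟩
    refine ⟨Aᶜ, by simpa using hA, ?_⟩
    intro f ε hε
    apply hK.2.1 _ _ (hK.2.2 _ _ (hconv f ε hε) hB)
    intro n hn
    simp only [Set.mem_setOf_eq, modSeq] at hn ⊢
    by_cases hnA : n ∈ Aᶜ
    · simp only [hnA, if_true] at hn
      by_cases hnB : n ∈ B
      · exact Or.inr hnB
      · have hnM : n ∈ M := by
          by_contra h
          have : n ∈ A ∪ B := hMc ▸ Set.mem_compl h
          rcases this with h'|h'
          · exact hnA h'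
          · exact hnB h'
        left
        simpa [hnM] using hn
    · simp only [hnA, if_false, sub_self, abs_zero] at hn
      linarith
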